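/- Let c₀₀ be the space of eventually zero real sequences with the sup norm, and K a compact Hausdorff space. Then C(K, c₀₀) has no nonzero right symmetric points: for any nonzero f ∈ C(K, c₀₀) there exists g ∈ C(K, c₀₀) with g ⊥_B f and f not ⊥_B g. -/

import Mathlib

set_option synthInstance.maxHeartbeats 1000000
set_option maxHeartbeats 1000000

noncomputable def c00 : Submodule ℝ (lp (fun _ : ℕ => ℝ) ⊤) where
  carrier := {f | (Function.support fun n => (f : ∀ _ : ℕ, ℝ) n).Finite}
  add_mem' := by
    intro a b ha hb
    refine Set.Finite.subset (ha.union hb) ?_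
    intro n hn
    simp only [Function.mem_support, lp.coeFn_add, Pi.add_apply] at hn
    by_contra h
    simp only [Set.mem_union, Function.mem_support, not_or, not_not] at h
    simp [h.1, h.2] at hn
  zero_mem' := by
    simp only [Set.mem_setOf_eq]
    convert Set.finite_empty
    ext n
    simp [lp.coeFn_zero]
  smul_mem' := by
    intro c a ha
    refine Set.Finite.subset ha ?_
    intro n hn
    simp only [Function.mem_support, lp.coeFn_smul, Pi.smul_apply, smul_eq_mul] at hn
    simp only [Function.mem_support]
    intro h
    simp [h] at hn

lemma mem_c00_iff (x : lp (fun _ : ℕ => ℝ) ⊤) :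
    x ∈ c00 ↔ (Function.support fun n => (x : ∀ _ : ℕ, ℝ) n).Finite := Iff.rfl

lemma c00_norm_eq (x : c00) : ‖x‖ = ‖(x : lp (fun _ : ℕ => ℝ) ⊤)‖ := rfl

lemma c00_coord_le_norm (x : c00) (m : ℕ) :
    |((x : lp (fun _ : ℕ => ℝ) ⊤) : ∀ _ : ℕ, ℝ) m| ≤ ‖x‖ := by
  simpa using lp.norm_apply_le_norm (by norm_num) (x : lp (fun _ : ℕ => ℝ) ⊤) m

lemma c00_norm_le (x : c00) {C : ℝ} (hC : 0 ≤ C)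
    (h : ∀ m, |((x : lp (fun _ : ℕ => ℝ) ⊤) : ∀ _ : ℕ, ℝ) m| ≤ C) : ‖x‖ ≤ C :=
  lp.norm_le_of_forall_le hC h

noncomputable def evalCLM (n : ℕ) : lp (fun _ : ℕ => ℝ) ⊤ →L[ℝ] ℝ :=
  LinearMap.mkContinuous
    { toFun := fun x => (x : ∀ _ : ℕ, ℝ) n
      map_add' := fun x y => by simp
      map_smul' := fun c x => by simp }
    1 (fun x => by rw [one_mul]; exact lp.norm_apply_le_norm (by norm_num) x n)

noncomputable def enc (n : ℕ) : c00 :=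
  ⟨lp.single ⊤ n 1, by
    rw [mem_c00_iff]
    refine (Set.finite_singleton n).subset fun m hm => ?_
    simp only [Function.mem_support] at hm
    by_contra h
    exact hm (lp.single_apply_ne ⊤ n 1 h)⟩

lemma enc_self (n : ℕ) : ((enc n : lp (fun _ : ℕ => ℝ) ⊤) : ∀ _ : ℕ, ℝ) n = 1 :=
  lp.single_apply_self ⊤ n 1

lemma enc_ne (n m : ℕ) (h : m ≠ n) : ((enc n : lp (fun _ : ℕ => ℝ) ⊤) : ∀ _ : ℕ, ℝ) m = 0 :=
  lp.single_apply_ne ⊤ n 1 h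

theorem no_right_symmetric_CK_c00 {K : Type*} [TopologicalSpace K] [CompactSpace K]
    [T2Space K] (f : C(K, c00)) (hf : f ≠ 0) :
    ∃ g : C(K, c00), (∀ lam : ℝ, ‖g + lam • f‖ ≥ ‖g‖) ∧
      ¬ (∀ lam : ℝ, ‖f + lam • g‖ ≥ ‖f‖) := by
  classical
  rcases isEmpty_or_nonempty K with hK | hK
  · exact absurd (by ext k; exact (hK.false k).elim) hf
  set M := ‖f‖ with hMdef
  have hM : 0 < M := norm_pos_iff.mpr hf
  obtain ⟨k₀⟩ := hK
  have hfk : ∀ k : K, ‖f k‖ ≤ M := fun k => f.norm_coe_le_norm k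
  -- finite subcover
  obtain ⟨t, ht⟩ := IsCompact.elim_finite_subcover isCompact_univ
    (fun j : K => f ⁻¹' Metric.ball (f j) (M / 4))
    (fun j => Metric.isOpen_ball.preimage f.continuous)
    (fun k _ => Set.mem_iUnion.2 ⟨k, by simp [Metric.mem_ball]; positivity⟩)
  -- the finite set of relevant coordinates
  have hS : (((⋃ j ∈ (t : Set K), Function.support fun m =>
      ((f j : lp (fun _ : ℕ => ℝ) ⊤) : ∀ _ : ℕ, ℝ) m)) ∪
      (Function.support fun m => ((f k₀ : lp (fun _ : ℕ => ℝ) ⊤) : ∀ _ : ℕ, ℝ) m)).Finite := by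
    refine Set.Finite.union ?_ ((mem_c00_iff _).mp (f k₀).2)
    exact Set.Finite.biUnion t.finite_toSet fun j _ => (mem_c00_iff _).mp (f j).2
  obtain ⟨n, hn⟩ := hS.infinite_compl.nonempty
  rw [Set.mem_compl_iff, Set.mem_union, not_or] at hn
  have hn₀ : ((f k₀ : lp (fun _ : ℕ => ℝ) ⊤) : ∀ _ : ℕ, ℝ) n = 0 :=
    Function.notMem_support.mp hn.2
  have htail : ∀ k : K, |((f k : lp (fun _ : ℕ => ℝ) ⊤) : ∀ _ : ℕ, ℝ) n| ≤ M / 4 := by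
    intro k
    have hk := ht (Set.mem_univ k)
    simp only [Set.mem_iUnion, Set.mem_preimage, Metric.mem_ball, exists_prop] at hk
    obtain ⟨j, hjt, hj⟩ := hk
    have hjn : ((f j : lp (fun _ : ℕ => ℝ) ⊤) : ∀ _ : ℕ, ℝ) n = 0 := by
      refine Function.notMem_support.mp fun hsup => hn.1 ?_
      exact Set.mem_biUnion hjt hsup
    have hdist : ‖f k - f j‖ < M / 4 := by rwa [dist_eq_norm] at hj
    have hcoord := c00_coord_le_norm (f k - f j) n
    have hsub : ((f k - f j : c00) : lp (fun _ : ℕ => ℝ) ⊤) =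
        (f k : lp (fun _ : ℕ => ℝ) ⊤) - (f j : lp (fun _ : ℕ => ℝ) ⊤) := by
      push_cast; ring
    rw [hsub, lp.coeFn_sub, Pi.sub_apply, hjn, sub_zero] at hcoord
    exact hcoord.trans hdist.le
  -- define g
  set g : C(K, c00) := ⟨fun k => f k + (M - evalCLM n (f k : lp (fun _ : ℕ => ℝ) ⊤)) • enc n, by
    refine (map_continuous f).add (Continuous.smul (f := fun k => M - evalCLM n (f k : lp (fun _ : ℕ => ℝ) ⊤)) (g := fun _ => enc n) ?_ continuous_const)
    exact (continuous_const.sub ((evalCLM n).continuous.comp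
      (continuous_subtype_val.comp (map_continuous f))))⟩ with hgdef
  have hg_coord : ∀ (k : K) (m : ℕ), ((g k : lp (fun _ : ℕ => ℝ) ⊤) : ∀ _ : ℕ, ℝ) m =
      ((f k : lp (fun _ : ℕ => ℝ) ⊤) : ∀ _ : ℕ, ℝ) m +
        (M - ((f k : lp (fun _ : ℕ => ℝ) ⊤) : ∀ _ : ℕ, ℝ) n) *
          ((enc n : lp (fun _ : ℕ => ℝ) ⊤) : ∀ _ : ℕ, ℝ) m := by
    intro k m
    simp only [hgdef, ContinuousMap.coe_mk, Submodule.coe_add, Submodule.coe_smul,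
      lp.coeFn_add, lp.coeFn_smul, Pi.add_apply, Pi.smul_apply, smul_eq_mul]
    rfl
  have hg_n : ∀ k : K, ((g k : lp (fun _ : ℕ => ℝ) ⊤) : ∀ _ : ℕ, ℝ) n = M := by
    intro k; rw [hg_coord, enc_self]; ring
  have hg_ne : ∀ (k : K) (m : ℕ), m ≠ n →
      ((g k : lp (fun _ : ℕ => ℝ) ⊤) : ∀ _ : ℕ, ℝ) m =
        ((f k : lp (fun _ : ℕ => ℝ) ⊤) : ∀ _ : ℕ, ℝ) m := by
    intro k m hm; rw [hg_coord, enc_ne n m hm]; ring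
  have hgk_norm : ∀ k : K, ‖g k‖ = M := by
    intro k
    refine le_antisymm (c00_norm_le _ hM.le fun m => ?_) ?_
    · rcases eq_or_ne m n with rfl | hm
      · rw [hg_n k]; rw [abs_of_pos hM]
      · rw [hg_ne k m hm]
        exact (c00_coord_le_norm (f k) m).trans (hfk k)
    · calc M = |((g k : lp (fun _ : ℕ => ℝ) ⊤) : ∀ _ : ℕ, ℝ) n| := by
            rw [hg_n k, abs_of_pos hM]
        _ ≤ ‖g k‖ := c00_coord_le_norm (g k) n
  have hgnorm : ‖g‖ = M := by
    refine le_antisymm ((g.norm_le hM.le).mpr fun k => (hgk_norm k).le) ?_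
    calc M = ‖g (k₀)‖ := (hgk_norm _).symm
      _ ≤ ‖g‖ := g.norm_coe_le_norm _
  refine ⟨g, ?_, ?_⟩
  · intro lam
    have h1 : ((((g + lam • f) : C(K, c00)) k₀ : lp (fun _ : ℕ => ℝ) ⊤) : ∀ _ : ℕ, ℝ) n = M := by
      have : ((g + lam • f) : C(K, c00)) k₀ = g k₀ + lam • f k₀ := rfl
      rw [this]
      have : ((g k₀ + lam • f k₀ : c00) : lp (fun _ : ℕ => ℝ) ⊤) =
          (g k₀ : lp (fun _ : ℕ => ℝ) ⊤) + lam • (f k₀ : lp (fun _ : ℕ => ℝ) ⊤) := rfl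
      rw [this, lp.coeFn_add, lp.coeFn_smul, Pi.add_apply, Pi.smul_apply, smul_eq_mul,
        hg_n k₀, hn₀, mul_zero, add_zero]
    calc ‖g‖ = M := hgnorm
      _ = |((((g + lam • f) : C(K, c00)) k₀ : lp (fun _ : ℕ => ℝ) ⊤) : ∀ _ : ℕ, ℝ) n| := by
          rw [h1, abs_of_pos hM]
      _ ≤ ‖((g + lam • f) : C(K, c00)) k₀‖ := c00_coord_le_norm _ n
      _ ≤ ‖g + lam • f‖ := ContinuousMap.norm_coe_le_norm _ k₀
  · intro hcon
    have hlam := hcon (-(1/2))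
    have hub : ‖f + (-(1/2) : ℝ) • g‖ ≤ 3 / 4 * M := by
      refine (ContinuousMap.norm_le _ (by positivity)).mpr fun k => ?_
      refine c00_norm_le _ (by positivity) fun m => ?_
      have hco : ((((f + (-(1/2) : ℝ) • g) : C(K, c00)) k : lp (fun _ : ℕ => ℝ) ⊤) : ∀ _ : ℕ, ℝ) m
          = ((f k : lp (fun _ : ℕ => ℝ) ⊤) : ∀ _ : ℕ, ℝ) m +
            (-(1/2)) * ((g k : lp (fun _ : ℕ => ℝ) ⊤) : ∀ _ : ℕ, ℝ) m := by
        have : ((f + (-(1/2) : ℝ) • g) : C(K, c00)) k = f k + (-(1/2) : ℝ) • g k := rfl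
        rw [this]
        have : ((f k + (-(1/2) : ℝ) • g k : c00) : lp (fun _ : ℕ => ℝ) ⊤) =
            (f k : lp (fun _ : ℕ => ℝ) ⊤) + (-(1/2) : ℝ) • (g k : lp (fun _ : ℕ => ℝ) ⊤) := rfl
        rw [this, lp.coeFn_add, lp.coeFn_smul, Pi.add_apply, Pi.smul_apply, smul_eq_mul]
      rw [hco]
      rcases eq_or_ne m n with rfl | hm
      · rw [hg_n k]
        have := htail k
        rw [abs_le] at this ⊢
        constructor <;> nlinarith [this.1, this.2]
      · rw [hg_ne k m hm]
        have h2 : |((f k : lp (fun _ : ℕ => ℝ) ⊤) : ∀ _ : ℕ, ℝ) m| ≤ M :=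
          (c00_coord_le_norm (f k) m).trans (hfk k)
        rw [abs_le] at h2 ⊢
        constructor <;> nlinarith [h2.1, h2.2]
    have : M ≤ 3 / 4 * M := le_trans hlam hub
    nlinarith
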